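/- Let t be a positive integer and G a finite simple graph such that: the minimum degree of G is at least t; the set of degree-t vertices is an independent set; and G contains no triangle v, w, u with deg(v) = t, deg(w) = t + 1 and deg(u) = t + 1. Let v be a vertex of degree exactly t whose neighbours admit a cyclic ordering v_1, v_2, …, v_t in which every two cyclically consecutive neighbours v_i, v_{i+1} are adjacent in G (as holds for every vertex of an edge-maximal graph embedded in a surface). Then v has at least ⌈t/2⌉ neighbours of degree at least t + 2. -/

import Mathlib

/-- Let `t > 0` and `G` have minimum degree at least `t`, with the degree-`t` vertices
independent, and no triangle with degrees `t`, `t+1`, `t+1`. If `v` has degree exactly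
`t` and its neighbours admit a cyclic ordering in which consecutive neighbours are
adjacent, then `v` has at least `⌈t/2⌉` neighbours of degree at least `t + 2`. -/
theorem degree_t_vertex_has_many_high_degree_neighbours
    {V : Type*} [Fintype V] [DecidableEq V]
    (G : SimpleGraph V) [DecidableRel G.Adj]
    (t : ℕ) (ht : 0 < t)
    (hmin : ∀ w, t ≤ G.degree w)
    (hind : ∀ a b, G.degree a = t → G.degree b = t → ¬ G.Adj a b)
    (htri : ∀ a b c, G.Adj a b → G.Adj a c → G.Adj b c →
      ¬ (G.degree a = t ∧ G.degree b = t + 1 ∧ G.degree c = t + 1))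
    (v : V) (hdv : G.degree v = t)
    (f : ZMod t → V)
    (hinj : Function.Injective f)
    (hmem : ∀ i, f i ∈ G.neighborFinset v)
    (hcyc : ∀ i, G.Adj (f i) (f (i + 1))) :
    (t + 1) / 2 ≤ ((G.neighborFinset v).filter (fun w => t + 2 ≤ G.degree w)).card := by
  haveI : NeZero t := ⟨ht.ne'⟩
  classical
  set B : Finset (ZMod t) := Finset.univ.filter (fun i => t + 2 ≤ G.degree (f i)) with hB
  have hadjv : ∀ i, G.Adj v (f i) := by
    intro i
    have := hmem i; rwa [SimpleGraph.mem_neighborFinset] at this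
  have hnbr : ∀ i, t + 1 ≤ G.degree (f i) := by
    intro i
    have hne : G.degree (f i) ≠ t := fun h => hind v (f i) hdv h (hadjv i)
    have := hmin (f i)
    omega
  have hkey : ∀ i : ZMod t, i ∈ B ∨ i + 1 ∈ B := by
    intro i
    by_contra h
    push_neg at h
    obtain ⟨h1, h2⟩ := h
    simp only [hB, Finset.mem_filter, Finset.mem_univ, true_and, not_le] at h1 h2
    have d1 : G.degree (f i) = t + 1 := by have := hnbr i; omega
    have d2 : G.degree (f (i + 1)) = t + 1 := by have := hnbr (i + 1); omega
    exact htri v (f i) (f (i + 1)) (hadjv i) (hadjv (i + 1)) (hcyc i) ⟨hdv, d1, d2⟩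
  have hA : ∀ i : ZMod t, i ∉ B → i + 1 ∈ B := fun i hi => (hkey i).resolve_left hi
  set A : Finset (ZMod t) := Bᶜ with hAdef
  have hdisj : Disjoint A (A.image (· + 1)) := by
    rw [Finset.disjoint_left]
    intro a ha hmem'
    obtain ⟨b, hb, hab⟩ := Finset.mem_image.mp hmem'
    have hbB : b ∉ B := by simpa [hAdef] using hb
    have haB : a ∉ B := by simpa [hAdef] using ha
    exact haB (hab ▸ hA b hbB)
  have hcardim : (A.image (· + 1)).card = A.card :=
    Finset.card_image_of_injective _ (add_left_injective 1)
  have hle : A.card + A.card ≤ t := by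
    have h := Finset.card_le_univ (A ∪ A.image (· + 1))
    rw [Finset.card_union_of_disjoint hdisj, hcardim] at h
    simpa [Finset.card_univ, ZMod.card] using h
  have hBcard : B.card = t - A.card := by
    have h1 : A.card = Fintype.card (ZMod t) - B.card := by
      rw [hAdef, Finset.card_compl]
    have h2 : B.card ≤ t := by
      have := Finset.card_le_univ B
      simpa [Finset.card_univ, ZMod.card] using this
    rw [ZMod.card] at h1
    omega
  have hBge : (t + 1) / 2 ≤ B.card := by omega
  refine hBge.trans ?_
  apply Finset.card_le_card_of_injOn f
  · intro i hi
    simp only [hB, Finset.mem_coe, Finset.mem_filter, Finset.mem_univ, true_and] at hi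
    exact Finset.mem_filter.mpr ⟨hmem i, hi⟩
  · exact hinj.injOn
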